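/- Suppose a discrete group G acts freely on a row-finite, finitely aligned multitree E with no sources, and the quotient graph Γ = G\E contains a loop η with no entrance. Then there is a vertex v′ ∈ E^0 such that the cylinder set Z_∂(v′) ⊆ ∂E is a singleton {[λ′]} and [λ′] has nontrivial isotropy; consequently the action G ↷ ∂E is not topologically free (assuming G is nontrivial). -/

import Mathlib

/-- A directed graph: vertices, edges, and range/source maps. -/
structure DirGraph where
  V : Type
  E : Type
  r : E → V
  s : E → V

namespace DirGraph

/-- `G.IsDPath v w p` : `p` is a directed path from `w` to `v`, i.e. a (possibly empty)
composable sequence of edges with range `v` and source `w`. -/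
def IsDPath (G : DirGraph) : G.V → G.V → List G.E → Prop
  | v, w, [] => v = w
  | v, w, e :: p => G.r e = v ∧ G.IsDPath (G.s e) w p

/-- The relation `v ≤ w` : there is a directed path from `w` to `v`. -/
def Le (G : DirGraph) (v w : G.V) : Prop := ∃ p, G.IsDPath v w p

/-- A multitree: there is at most one directed path between any two vertices. -/
def IsMultitree (G : DirGraph) : Prop :=
  ∀ v w p q, G.IsDPath v w p → G.IsDPath v w q → p = q

/-- Row-finite: every vertex receives finitely many edges. -/
def RowFinite (G : DirGraph) : Prop := ∀ v, {e : G.E | G.r e = v}.Finite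

/-- No sources: every vertex receives at least one edge. -/
def NoSources (G : DirGraph) : Prop := ∀ v, ∃ e, G.r e = v

/-- The set of minimal common upper bounds of `v` and `w`. -/
def mub (G : DirGraph) (v w : G.V) : Set G.V :=
  {u | G.Le v u ∧ G.Le w u ∧ ∀ u', G.Le v u' → G.Le w u' → G.Le u' u → u' = u}

/-- Finitely aligned: any two vertices have finitely many minimal common upper bounds. -/
def FinAligned (G : DirGraph) : Prop := ∀ v w, (G.mub v w).Finite

/-- Infinite (directed) paths in `G`. -/
def InfPath (G : DirGraph) := {l : ℕ → G.E // ∀ n, G.s (l n) = G.r (l (n + 1))}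

/-- Shift-tail equivalence of infinite paths. -/
def stEquiv (G : DirGraph) (a b : G.InfPath) : Prop :=
  ∃ m n : ℕ, ∀ k, a.1 (m + k) = b.1 (n + k)

/-- The boundary `∂G`: shift-tail equivalence classes of infinite paths. -/
def Bdry (G : DirGraph) := Quot G.stEquiv

/-- The cylinder set `Z_∂(v) ⊆ ∂G` of boundary classes of infinite paths with range `v`. -/
def Zb (G : DirGraph) (v : G.V) : Set G.Bdry :=
  {x | ∃ l : G.InfPath, G.r (l.1 0) = v ∧ Quot.mk G.stEquiv l = x}

/-- The cylinder-set topology on the boundary `∂G`. -/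
def bdryTop (G : DirGraph) : TopologicalSpace G.Bdry :=
  TopologicalSpace.generateFrom {S | ∃ v, S = G.Zb v}

/-- The cylinder set `Z(v) ⊆ Ω = G.V ⊕ ∂G`: vertices `w` with a path from `w` to `v`,
together with boundary classes of infinite paths through `v`. -/
def Zfull (G : DirGraph) (v : G.V) : Set (G.V ⊕ G.Bdry) :=
  {x | Sum.elim (fun w => G.Le v w) (fun b => b ∈ G.Zb v) x}

end DirGraph

namespace DirGraph

variable {Γgrp : Type} [Group Γgrp]

/-- The quotient directed graph `G\E` of a graph action: vertices and edges are the
orbits of vertices and edges. -/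
def quotGraph (Γgrp : Type) [Group Γgrp] (E : DirGraph)
    [MulAction Γgrp E.V] [MulAction Γgrp E.E]
    (hr : ∀ (g : Γgrp) (e : E.E), E.r (g • e) = g • E.r e)
    (hs : ∀ (g : Γgrp) (e : E.E), E.s (g • e) = g • E.s e) : DirGraph where
  V := Quotient (MulAction.orbitRel Γgrp E.V)
  E := Quotient (MulAction.orbitRel Γgrp E.E)
  r := Quotient.map E.r (by
    intro a b hab
    obtain ⟨g, hg⟩ := hab
    exact ⟨g, by simp only [← hr, hg]⟩)
  s := Quotient.map E.s (by
    intro a b hab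
    obtain ⟨g, hg⟩ := hab
    exact ⟨g, by simp only [← hs, hg]⟩)

/-- The induced action of a group element on infinite paths. -/
def actInf (E : DirGraph) [MulAction Γgrp E.V] [MulAction Γgrp E.E]
    (hr : ∀ (g : Γgrp) (e : E.E), E.r (g • e) = g • E.r e)
    (hs : ∀ (g : Γgrp) (e : E.E), E.s (g • e) = g • E.s e)
    (g : Γgrp) (l : E.InfPath) : E.InfPath :=
  ⟨fun n => g • l.1 n, fun n => by rw [hs, hr, l.2 n]⟩

/-- The induced action of a group element on the boundary `∂E`. -/
def actBdry (E : DirGraph) [MulAction Γgrp E.V] [MulAction Γgrp E.E]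
    (hr : ∀ (g : Γgrp) (e : E.E), E.r (g • e) = g • E.r e)
    (hs : ∀ (g : Γgrp) (e : E.E), E.s (g • e) = g • E.s e)
    (g : Γgrp) : E.Bdry → E.Bdry :=
  Quot.map (E.actInf hr hs g) (by
    rintro a b ⟨m, n, h⟩
    exact ⟨m, n, fun k => by simp only [actInf, h k]⟩)

end DirGraph

open DirGraph in
/-- If `G` (nontrivial) acts freely on the multitree `E` and the quotient graph
`Γ = G\E` has a loop with no entrance, then some cylinder set `Z_∂(v')` of `∂E` is a
singleton `{[λ']}` whose point has nontrivial isotropy; consequently `G ↷ ∂E` is not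
topologically free. -/
theorem stmt15 (Γgrp : Type) [Group Γgrp] [Countable Γgrp] [Nontrivial Γgrp]
    (E : DirGraph) [Countable E.V] [Countable E.E]
    [MulAction Γgrp E.V] [MulAction Γgrp E.E]
    (hr : ∀ (g : Γgrp) (e : E.E), E.r (g • e) = g • E.r e)
    (hs : ∀ (g : Γgrp) (e : E.E), E.s (g • e) = g • E.s e)
    (hmt : E.IsMultitree) (hrow : E.RowFinite) (hnsrc : E.NoSources)
    (hfa : E.FinAligned)
    (hfree : ∀ (g : Γgrp) (v : E.V), g • v = v → g = 1)
    (hloop : ∃ (x : (quotGraph Γgrp E hr hs).V) (p : List (quotGraph Γgrp E hr hs).E),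
      p ≠ [] ∧ (quotGraph Γgrp E hr hs).IsDPath x x p ∧
        ∀ e ∈ p, ∀ f g : (quotGraph Γgrp E hr hs).E,
          (quotGraph Γgrp E hr hs).r f = (quotGraph Γgrp E hr hs).r e →
          (quotGraph Γgrp E hr hs).r g = (quotGraph Γgrp E hr hs).r e → f = g) :
    (∃ (v' : E.V) (l : E.InfPath), E.r (l.1 0) = v' ∧
      E.Zb v' = {Quot.mk E.stEquiv l} ∧
      ∃ g : Γgrp, g ≠ 1 ∧
        E.actBdry hr hs g (Quot.mk E.stEquiv l) = Quot.mk E.stEquiv l) ∧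
    ¬ @Dense E.Bdry E.bdryTop
        {b | ∀ g : Γgrp, E.actBdry hr hs g b = b → g = 1} := by

  classical
  obtain ⟨x, p, hpne, hpath, huniq⟩ := hloop
  let Q : DirGraph := quotGraph Γgrp E hr hs
  let πV : E.V → Q.V := Quotient.mk _
  let πE : E.E → Q.E := Quotient.mk _
  have hQr : ∀ e : E.E, Q.r (πE e) = πV (E.r e) := fun e => rfl
  have hQs : ∀ e : E.E, Q.s (πE e) = πV (E.s e) := fun e => rfl
  -- the set of vertices of E lying over vertices of the loop
  have hx : ∃ e ∈ p, Q.r e = x := by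
    obtain ⟨e, tl, hptl⟩ := List.exists_cons_of_ne_nil hpne
    refine ⟨e, by rw [hptl]; exact List.mem_cons_self .., ?_⟩
    have h2 := hpath
    rw [hptl] at h2
    exact h2.1
  set Rv : Set E.V := {v | ∃ e ∈ p, Q.r e = πV v} with hRvdef
  -- sources of loop edges are loop vertices
  have hsrc : ∀ e ∈ p, ∃ e' ∈ p, Q.r e' = Q.s e := by
    have gen : ∀ q : List Q.E, (∀ e ∈ q, e ∈ p) → ∀ a, Q.IsDPath a x q →
        ∀ e ∈ q, ∃ e' ∈ p, Q.r e' = Q.s e := by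
      intro q
      induction q with
      | nil => intro _ a _ e he; exact absurd he List.not_mem_nil
      | cons e tl ih =>
        intro hsub a hpa f hf
        obtain ⟨hre, htl⟩ := hpa
        rcases List.mem_cons.mp hf with rfl | hftl
        · cases tl with
          | nil =>
            have hse : Q.s f = x := htl
            obtain ⟨e', he'p, he'⟩ := hx
            exact ⟨e', he'p, by rw [he', hse]⟩
          | cons e2 tl2 =>
            exact ⟨e2, hsub e2 (List.mem_cons_of_mem _ (List.mem_cons_self ..)), htl.1⟩
        · exact ih (fun z hz => hsub z (List.mem_cons_of_mem _ hz)) (Q.s e) htl f hftl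
    exact fun e he => gen p (fun _ h => h) x hpath e he
  -- each vertex over the loop receives a unique edge, whose source lies over the loop
  have key : ∀ v ∈ Rv, ∃ f : E.E, E.r f = v ∧ (∀ f', E.r f' = v → f' = f) ∧ E.s f ∈ Rv := by
    rintro v ⟨e, hep, hre⟩
    obtain ⟨f, hf⟩ := hnsrc v
    have hclass : ∀ f' : E.E, E.r f' = v → πE f' = e := by
      intro f' hf'
      refine huniq e hep (πE f') e ?_ rfl
      rw [hQr, hf', ← hre]
    refine ⟨f, hf, ?_, ?_⟩
    · intro f' hf'
      have h12 : πE f' = πE f := by rw [hclass f' hf', hclass f hf]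
      have hrel : f' ∈ MulAction.orbit Γgrp f := Quotient.exact h12
      obtain ⟨g, hg⟩ := MulAction.mem_orbit_iff.mp hrel
      have : g • v = v := by
        conv_lhs => rw [← hf]
        rw [← hr, hg, hf']
      rw [hfree g v this, one_smul] at hg
      exact hg.symm
    · obtain ⟨e', he'p, he'⟩ := hsrc e hep
      refine ⟨e', he'p, ?_⟩
      rw [he', ← hclass f hf, hQs]
  choose! F hF1 hF2 hF3 using key
  let Fw : {v : E.V // v ∈ Rv} → E.E := fun w => F w.1 w.2
  have hFw1 : ∀ w, E.r (Fw w) = w.1 := fun w => hF1 w.1 w.2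
  have hFw2 : ∀ w f', E.r f' = w.1 → f' = Fw w := fun w => hF2 w.1 w.2
  have hFw3 : ∀ w, E.s (Fw w) ∈ Rv := fun w => hF3 w.1 w.2
  -- base point
  let v' : E.V := x.out
  have hπv' : πV v' = x := Quotient.out_eq x
  have hv' : v' ∈ Rv := by
    obtain ⟨e, hep, hre⟩ := hx
    exact ⟨e, hep, by rw [hπv']; exact hre⟩
  -- the canonical vertex sequence
  let vseq : ℕ → {v : E.V // v ∈ Rv} := fun n =>
    Nat.rec ⟨v', hv'⟩ (fun _ w => ⟨E.s (Fw w), hFw3 w⟩) n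
  have hvseqS : ∀ n, (vseq (n+1)).1 = E.s (Fw (vseq n)) := fun n => rfl
  -- the canonical infinite path
  let l : E.InfPath := ⟨fun n => Fw (vseq n), by
    intro n
    rw [hFw1 (vseq (n+1)), hvseqS n]⟩
  have hl : ∀ n, l.1 n = Fw (vseq n) := fun n => rfl
  have hl0 : E.r (l.1 0) = v' := hFw1 (vseq 0)
  -- uniqueness of infinite paths through Rv
  have uniqInf : ∀ (m m' : E.InfPath), E.r (m.1 0) = E.r (m'.1 0) → E.r (m.1 0) ∈ Rv →
      ∀ k, m.1 k = m'.1 k := by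
    intro m m' h0 hv0
    have H : ∀ k, E.r (m.1 k) = E.r (m'.1 k) ∧ E.r (m.1 k) ∈ Rv := by
      intro k
      induction k with
      | zero => exact ⟨h0, hv0⟩
      | succ k ih =>
        obtain ⟨heq, hmem⟩ := ih
        have he1 : m.1 k = Fw ⟨E.r (m.1 k), hmem⟩ := hFw2 _ _ rfl
        have he2 : m'.1 k = Fw ⟨E.r (m.1 k), hmem⟩ := hFw2 _ _ heq.symm
        constructor
        · rw [← m.2 k, ← m'.2 k, he1, he2]
        · rw [← m.2 k, he1]; exact hFw3 _
    intro k
    obtain ⟨heq, hmem⟩ := H k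
    rw [hFw2 ⟨E.r (m.1 k), hmem⟩ (m.1 k) rfl, hFw2 ⟨E.r (m.1 k), hmem⟩ (m'.1 k) heq.symm]
  -- Z_∂(v') is a singleton
  have hZb : E.Zb v' = {Quot.mk E.stEquiv l} := by
    ext b
    constructor
    · rintro ⟨m, hm0, rfl⟩
      have hmem0 : E.r (m.1 0) ∈ Rv := by rw [hm0]; exact hv'
      have heq0 : E.r (m.1 0) = E.r (l.1 0) := by rw [hm0, hl0]
      have : m = l := Subtype.ext (funext (uniqInf m l heq0 hmem0))
      rw [this]; rfl
    · rintro rfl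
      exact ⟨l, hl0, rfl⟩
  -- tracking the quotient loop
  have track : ∀ q : List Q.E, (∀ e ∈ q, e ∈ p) → ∀ a n,
      Q.IsDPath (πV (vseq n).1) a q → πV (vseq (n + q.length)).1 = a := by
    intro q
    induction q with
    | nil => intro _ a n h; exact h
    | cons e tl ih =>
      intro hsub a n hpa
      obtain ⟨hre, htl⟩ := hpa
      have hev : πE (Fw (vseq n)) = e := by
        refine huniq e (hsub e (List.mem_cons_self ..)) _ e ?_ rfl
        rw [hQr, hFw1 (vseq n), hre]
      have hse : Q.s e = πV (vseq (n+1)).1 := by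
        rw [← hev, hQs, hvseqS n]
      rw [hse] at htl
      have := ih (fun z hz => hsub z (List.mem_cons_of_mem _ hz)) a (n+1) htl
      have harith : n + 1 + tl.length = n + (e :: tl).length := by
        simp [List.length_cons]; omega
      rw [← harith]
      exact this
  set d := p.length with hddef
  have hdpos : 0 < d := List.length_pos_iff.mpr hpne
  have hcyc : πV (vseq d).1 = x := by
    have h0 : Q.IsDPath (πV (vseq 0).1) x p := by
      have h1 : πV (vseq 0).1 = x := hπv'
      rw [h1]; exact hpath
    have := track p (fun _ h => h) x 0 h0
    simpa using this
  have hcyc' : πV (vseq d).1 = πV v' := by rw [hcyc, hπv']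
  have hrel : (vseq d).1 ∈ MulAction.orbit Γgrp v' := Quotient.exact hcyc'
  obtain ⟨g, hg⟩ := MulAction.mem_orbit_iff.mp hrel
  -- finite paths in E following the canonical sequence
  let epath : ℕ → ℕ → List E.E := fun k =>
    Nat.rec (motive := fun _ => ℕ → List E.E) (fun _ => [])
      (fun _ ih n => Fw (vseq n) :: ih (n+1)) k
  have hepath : ∀ k n, E.IsDPath (vseq n).1 (vseq (n + k)).1 (epath k n) := by
    intro k
    induction k with
    | zero => intro n; exact rfl
    | succ k ih =>
      intro n
      refine ⟨hFw1 (vseq n), ?_⟩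
      have := ih (n+1)
      have harith : n + 1 + k = n + (k + 1) := by omega
      rw [harith] at this
      rw [hvseqS n] at this
      exact this
  have hg1 : g ≠ 1 := by
    intro h1
    rw [h1, one_smul] at hg
    have h2 : E.IsDPath v' v' (epath d 0) := by
      have h4 := hepath d 0
      rw [Nat.zero_add] at h4
      rw [← hg] at h4
      exact h4
    have h3 : E.IsDPath v' v' ([] : List E.E) := rfl
    have h5 := hmt v' v' (epath d 0) [] h2 h3
    obtain ⟨d', hd'⟩ := Nat.exists_eq_succ_of_ne_zero (Nat.pos_iff_ne_zero.mp hdpos)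
    rw [hd'] at h5
    exact List.cons_ne_nil _ _ h5
  -- g fixes the boundary point
  have hshift : ∀ k, (E.actInf hr hs g l).1 k = l.1 (d + k) := by
    set gl := E.actInf hr hs g l with hgl
    set lsh : E.InfPath := ⟨fun k => l.1 (d + k), fun k => l.2 (d + k)⟩ with hlsh
    have h0 : E.r (gl.1 0) = E.r (lsh.1 0) := by
      show E.r (g • l.1 0) = E.r (l.1 (d + 0))
      rw [hr, hl0, hg, hl (d+0), hFw1 (vseq (d+0)), Nat.add_zero]
    have hm0 : E.r (gl.1 0) ∈ Rv := by
      show E.r (g • l.1 0) ∈ Rv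
      rw [hr, hl0, hg]
      exact (vseq d).2
    exact uniqInf gl lsh h0 hm0
  have hfix : E.actBdry hr hs g (Quot.mk E.stEquiv l) = Quot.mk E.stEquiv l := by
    show Quot.mk E.stEquiv (E.actInf hr hs g l) = Quot.mk E.stEquiv l
    exact Quot.sound ⟨0, d, fun k => by rw [Nat.zero_add]; exact hshift k⟩
  refine ⟨⟨v', l, hl0, hZb, g, hg1, hfix⟩, ?_⟩
  intro hdense
  letI : TopologicalSpace E.Bdry := E.bdryTop
  have hopen : @IsOpen _ E.bdryTop (E.Zb v') :=
    TopologicalSpace.isOpen_generateFrom_of_mem ⟨v', rfl⟩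
  have hne : (E.Zb v').Nonempty := ⟨Quot.mk E.stEquiv l, by rw [hZb]; rfl⟩
  obtain ⟨b, hb1, hb2⟩ :=
    dense_iff_inter_open.mp hdense (E.Zb v') hopen hne
  rw [hZb] at hb1
  replace hb1 : b = Quot.mk E.stEquiv l := hb1
  subst hb1
  exact hg1 (hb2 g hfix)
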